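/- For m ≥ 2, the stabilizer in O(2) of the polynomial p_m(x,y) + (x² + y²)·q_m(x,y) is exactly the cyclic rotation group K_m. -/

import Mathlib

open MvPolynomial Real Matrix Complex

/-- The rotation of `ℝ²` by angle `θ`. -/
noncomputable def rotMat (θ : ℝ) : Matrix (Fin 2) (Fin 2) ℝ :=
  !![Real.cos θ, -Real.sin θ; Real.sin θ, Real.cos θ]

/-- The stabilizer in `O(2)` of a polynomial `P`. -/
def polyStab (P : MvPolynomial (Fin 2) ℝ) : Set (Matrix (Fin 2) (Fin 2) ℝ) :=
  {A | A * Aᵀ = 1 ∧ ∀ v : Fin 2 → ℝ, eval (A.mulVec v) P = eval v P}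

/-- The cyclic group `K_m` of rotations of order `m`. -/
noncomputable def CycSet (m : ℕ) : Set (Matrix (Fin 2) (Fin 2) ℝ) :=
  {A | ∃ k : ℕ, k < m ∧ A = rotMat (2 * π * k / m)}

private lemma aux_w_eq_one {w : ℂ} (h1 : w.re + w.im = 1) (h2 : w.re + 4 * w.im = 1) :
    w = 1 := by
  apply Complex.ext <;> simp <;> linarith

/-- extract `w = 1` from the two real-axis instances -/
private lemma aux_w_of_h (m : ℕ) {w : ℂ}
    (h1 : (w * (1:ℂ)^m).re + Complex.normSq (1:ℂ) * (w * (1:ℂ)^m).im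
        = ((1:ℂ)^m).re + Complex.normSq (1:ℂ) * ((1:ℂ)^m).im)
    (h2 : (w * (2:ℂ)^m).re + Complex.normSq (2:ℂ) * (w * (2:ℂ)^m).im
        = ((2:ℂ)^m).re + Complex.normSq (2:ℂ) * ((2:ℂ)^m).im) : w = 1 := by
  have h2c : ((2:ℂ))^m = ((2^m : ℝ) : ℂ) := by push_cast; ring
  rw [h2c] at h2
  simp only [one_pow, mul_one, Complex.normSq_one, one_mul, Complex.one_re, Complex.one_im,
    mul_zero, add_zero] at h1
  simp only [Complex.mul_re, Complex.mul_im, Complex.ofReal_re, Complex.ofReal_im,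
    Complex.normSq_apply, Complex.re_ofNat, Complex.im_ofNat, mul_zero, zero_mul,
    sub_zero, add_zero, zero_add] at h2
  have hpow : (0:ℝ) < 2^m := by positivity
  have h2' : w.re + 4 * w.im = 1 := by
    have h := mul_right_cancel₀ (ne_of_gt hpow)
      (show (w.re + 4 * w.im) * 2^m = 1 * 2^m by linear_combination h2)
    linarith
  exact aux_w_eq_one h1 h2'

set_option maxHeartbeats 1600000 in
/-- For `m ≥ 2`, the stabilizer in `O(2)` of the polynomial
`p_m + (x² + y²)·q_m` is exactly the cyclic rotation group `K_m`. -/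
theorem stmt8 (m : ℕ) (hm : 2 ≤ m) (p q : MvPolynomial (Fin 2) ℝ)
    (hp : ∀ v : Fin 2 → ℝ, eval v p = (((v 0 : ℂ) + (v 1 : ℂ) * Complex.I) ^ m).re)
    (hq : ∀ v : Fin 2 → ℝ, eval v q = (((v 0 : ℂ) + (v 1 : ℂ) * Complex.I) ^ m).im) :
    polyStab (p + (X 0 ^ 2 + X 1 ^ 2) * q) = CycSet m := by
  have hm0 : (m:ℝ) ≠ 0 := by positivity
  have hm0' : (m:ℂ) ≠ 0 := by exact_mod_cast Nat.cast_ne_zero.mpr (by omega)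
  have hPe : ∀ v : Fin 2 → ℝ,
      eval v (p + (X 0 ^ 2 + X 1 ^ 2) * q)
        = (((v 0 : ℂ) + (v 1:ℂ)*Complex.I)^m).re
          + (v 0 ^ 2 + v 1 ^ 2) * (((v 0:ℂ)+(v 1:ℂ)*Complex.I)^m).im := by
    intro v
    simp only [map_add, _root_.map_mul, map_pow, eval_X, hp, hq]
  ext A
  simp only [polyStab, CycSet, Set.mem_setOf_eq]
  constructor
  · rintro ⟨horth, hinv⟩
    have hAtA : Aᵀ * A = 1 := mul_eq_one_comm.mp horth
    set a := A 0 0 with ha'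
    set b := A 0 1 with hb'
    set c := A 1 0 with hc'
    set d := A 1 1 with hd'
    have e1 : a*a + c*c = 1 := by
      have := (Matrix.ext_iff.mpr hAtA) 0 0
      simpa [Matrix.mul_apply, Fin.sum_univ_two, Matrix.one_apply] using this
    have e2 : a*b + c*d = 0 := by
      have := (Matrix.ext_iff.mpr hAtA) 0 1
      simpa [Matrix.mul_apply, Fin.sum_univ_two, Matrix.one_apply] using this
    have e3 : b*b + d*d = 1 := by
      have := (Matrix.ext_iff.mpr hAtA) 1 1
      simpa [Matrix.mul_apply, Fin.sum_univ_two, Matrix.one_apply] using this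
    have hdet : (a*d - b*c - 1) * (a*d - b*c + 1) = 0 := by
      linear_combination (b*b+d*d) * e1 + e3 - (a*b+c*d) * e2
    set u : ℂ := (a:ℂ) + (c:ℂ) * Complex.I with hu'
    have hu2 : Complex.normSq u = 1 := by
      rw [hu', Complex.normSq_add_mul_I]; nlinarith [e1]
    rcases mul_eq_zero.mp hdet with hcase | hcase
    · -- rotation: d = a, b = -c
      have hsum : (d-a)^2 + (b+c)^2 = 0 := by linear_combination e1 + e3 - 2*hcase
      have hd : d = a := by
        have h5 : (d-a)^2 = 0 := by nlinarith [sq_nonneg (b+c)]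
        have := sq_eq_zero_iff.mp h5; linarith
      have hb : b = -c := by
        have h5 : (b+c)^2 = 0 := by nlinarith [sq_nonneg (d-a)]
        have := sq_eq_zero_iff.mp h5; linarith
      have h' : ∀ z : ℂ, (u^m * z^m).re + Complex.normSq z * (u^m * z^m).im
          = (z^m).re + Complex.normSq z * (z^m).im := by
        intro z
        have hthis := hinv ![z.re, z.im]
        rw [hPe, hPe] at hthis
        have hv0 : A.mulVec ![z.re, z.im] 0 = a * z.re - c * z.im := by
          simp [Matrix.mulVec, dotProduct, Fin.sum_univ_two, ← ha', ← hb', hb]; ring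
        have hv1 : A.mulVec ![z.re, z.im] 1 = c * z.re + a * z.im := by
          simp [Matrix.mulVec, dotProduct, Fin.sum_univ_two, ← hc', ← hd', hd]
        rw [hv0, hv1] at hthis
        have hc1 : ((a * z.re - c * z.im : ℝ) : ℂ) + ((c * z.re + a * z.im : ℝ):ℂ) * Complex.I
            = u * z := by
          apply Complex.ext <;> simp [hu'] <;> ring
        have hn1 : (a * z.re - c * z.im)^2 + (c * z.re + a * z.im)^2 = Complex.normSq z := by
          rw [Complex.normSq_apply]; linear_combination (z.re*z.re + z.im*z.im) * e1
        have hn2 : z.re^2 + z.im^2 = Complex.normSq z := by rw [Complex.normSq_apply]; ring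
        simp only [Matrix.cons_val_zero, Matrix.cons_val_one, Matrix.head_cons] at hthis
        rw [hc1, hn1, hn2, Complex.re_add_im, mul_pow] at hthis
        exact hthis
      have hw : u ^ m = 1 := aux_w_of_h m (h' 1) (h' 2)
      have habs : ‖u‖ = 1 := by
        rw [Complex.norm_def, hu2, Real.sqrt_one]
      have hu_exp : Complex.exp (↑u.arg * Complex.I) = u := by
        conv_rhs => rw [← Complex.norm_mul_exp_arg_mul_I u]
        rw [habs]; simp
      set θ := u.arg with hθ'
      have hexp1 : Complex.exp (↑m * (↑θ * Complex.I)) = 1 := by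
        rw [Complex.exp_nat_mul, hu_exp, hw]
      obtain ⟨n, hn⟩ := Complex.exp_eq_one_iff.mp hexp1
      have hθeq : (m:ℝ) * θ = n * (2 * π) := by
        have := congrArg Complex.im hn
        simpa [Complex.mul_im] using this
      have hmZ : 0 < (m:ℤ) := by omega
      set k : ℕ := (n % (m:ℤ)).toNat with hk'
      have hk1 : (k:ℤ) = n % (m:ℤ) := Int.toNat_of_nonneg (Int.emod_nonneg n (by omega))
      have hk2 : k < m := by
        have := Int.emod_lt_of_pos n hmZ; omega
      have hθ2 : θ = 2*π*(n:ℝ)/m := by field_simp; linarith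
      have hsplit : θ = 2*π*k/m + ((n / (m:ℤ) : ℤ) : ℝ) * (2*π) := by
        have hnn : (n:ℝ) = (k:ℝ) + ((n / (m:ℤ) : ℤ) : ℝ) * m := by
          have h := Int.mul_ediv_add_emod n (m:ℤ)
          rw [← hk1] at h
          have h2 := congrArg (Int.cast : ℤ → ℝ) h
          push_cast at h2
          linarith
        rw [hθ2, hnn]; field_simp
      have hcos : Real.cos θ = Real.cos (2*π*k/m) := by
        rw [hsplit, Real.cos_add_int_mul_two_pi]
      have hsin : Real.sin θ = Real.sin (2*π*k/m) := by
        rw [hsplit, Real.sin_add_int_mul_two_pi]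
      have hare : a = Real.cos θ := by
        have : u.re = Real.cos θ := by rw [← hu_exp, Complex.exp_ofReal_mul_I_re]
        rw [← this, hu']; simp
      have hcim : c = Real.sin θ := by
        have : u.im = Real.sin θ := by rw [← hu_exp, Complex.exp_ofReal_mul_I_im]
        rw [← this, hu']; simp
      refine ⟨k, hk2, ?_⟩
      have hA : A = !![a, b; c, d] := by
        ext i j; fin_cases i <;> fin_cases j <;> rfl
      rw [hA, hb, hd, hare, hcim, hcos, hsin, rotMat]
    · -- reflection: impossible
      exfalso
      have hsum : (d+a)^2 + (b-c)^2 = 0 := by linear_combination e1 + e3 + 2*hcase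
      have hd : d = -a := by
        have h5 : (d+a)^2 = 0 := by nlinarith [sq_nonneg (b-c)]
        have := sq_eq_zero_iff.mp h5; linarith
      have hb : b = c := by
        have h5 : (b-c)^2 = 0 := by nlinarith [sq_nonneg (d+a)]
        have := sq_eq_zero_iff.mp h5; linarith
      have h' : ∀ z : ℂ,
          (u^m * ((starRingEnd ℂ) z)^m).re
            + Complex.normSq z * (u^m * ((starRingEnd ℂ) z)^m).im
          = (z^m).re + Complex.normSq z * (z^m).im := by
        intro z
        have hthis := hinv ![z.re, z.im]
        rw [hPe, hPe] at hthis
        have hv0 : A.mulVec ![z.re, z.im] 0 = a * z.re + c * z.im := by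
          simp [Matrix.mulVec, dotProduct, Fin.sum_univ_two, ← ha', ← hb', hb]
        have hv1 : A.mulVec ![z.re, z.im] 1 = c * z.re - a * z.im := by
          simp [Matrix.mulVec, dotProduct, Fin.sum_univ_two, ← hc', ← hd', hd]; ring
        rw [hv0, hv1] at hthis
        have hc1 : ((a * z.re + c * z.im : ℝ) : ℂ) + ((c * z.re - a * z.im : ℝ):ℂ) * Complex.I
            = u * (starRingEnd ℂ) z := by
          apply Complex.ext <;> simp [hu'] <;> ring
        have hn1 : (a * z.re + c * z.im)^2 + (c * z.re - a * z.im)^2 = Complex.normSq z := by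
          rw [Complex.normSq_apply]; linear_combination (z.re*z.re + z.im*z.im) * e1
        have hn2 : z.re^2 + z.im^2 = Complex.normSq z := by rw [Complex.normSq_apply]; ring
        simp only [Matrix.cons_val_zero, Matrix.cons_val_one, Matrix.head_cons] at hthis
        rw [hc1, hn1, hn2, Complex.re_add_im, mul_pow] at hthis
        exact hthis
      have hw : u ^ m = 1 := by
        have g1 := h' 1
        have g2 := h' 2
        rw [show (starRingEnd ℂ) (1:ℂ) = 1 from map_one _] at g1
        rw [show (starRingEnd ℂ) (2:ℂ) = 2 from map_ofNat _ 2] at g2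
        exact aux_w_of_h m g1 g2
      set z₀ : ℂ := Complex.exp (↑(π/(2*m)) * Complex.I) with hz₀'
      have hz₀m : z₀ ^ m = Complex.I := by
        rw [hz₀', ← Complex.exp_nat_mul]
        have : (m:ℂ) * (↑(π/(2*m)) * Complex.I) = ↑(π/2) * Complex.I := by
          push_cast; field_simp
        rw [this, Complex.exp_mul_I, ← Complex.ofReal_cos, ← Complex.ofReal_sin,
          Real.cos_pi_div_two, Real.sin_pi_div_two]
        simp
      have hz₀n : Complex.normSq z₀ = 1 := by
        rw [← Complex.sq_norm, hz₀', Complex.norm_exp_ofReal_mul_I, one_pow]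
      have := h' z₀
      rw [hw, ← map_pow, hz₀m, hz₀n] at this
      simp at this
      norm_num at this
  · rintro ⟨k, hk, rfl⟩
    set θ := 2*π*(k:ℝ)/m with hθ'
    constructor
    · rw [show (rotMat θ)ᵀ = !![Real.cos θ, Real.sin θ; -Real.sin θ, Real.cos θ] from by
        ext i j; fin_cases i <;> fin_cases j <;> rfl]
      rw [rotMat, Matrix.mul_fin_two]
      have h := Real.sin_sq_add_cos_sq θ
      ext i j
      fin_cases i <;> fin_cases j <;> simp [Matrix.one_apply] <;> nlinarith [h]
    · intro v
      rw [hPe, hPe]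
      have hv0 : (rotMat θ).mulVec v 0 = Real.cos θ * v 0 - Real.sin θ * v 1 := by
        simp [rotMat, Matrix.mulVec, dotProduct, Fin.sum_univ_two]; ring
      have hv1 : (rotMat θ).mulVec v 1 = Real.sin θ * v 0 + Real.cos θ * v 1 := by
        simp [rotMat, Matrix.mulVec, dotProduct, Fin.sum_univ_two]
      rw [hv0, hv1]
      have hz : ((Real.cos θ * v 0 - Real.sin θ * v 1 : ℝ):ℂ)
          + ((Real.sin θ * v 0 + Real.cos θ * v 1 : ℝ):ℂ) * Complex.I
          = Complex.exp (↑θ * Complex.I) * ((v 0 : ℂ) + (v 1:ℂ)*Complex.I) := by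
        rw [Complex.exp_mul_I, ← Complex.ofReal_cos, ← Complex.ofReal_sin]
        apply Complex.ext <;> simp <;> ring
      have hexp : Complex.exp (↑θ * Complex.I) ^ m = 1 := by
        rw [← Complex.exp_nat_mul]
        have : (m:ℂ) * (↑θ * Complex.I) = ((k:ℤ):ℂ) * (2*(π:ℂ)*Complex.I) := by
          rw [hθ']; push_cast; field_simp
        rw [this, Complex.exp_int_mul_two_pi_mul_I]
      rw [hz, mul_pow, hexp, one_mul]
      have hn : (Real.cos θ * v 0 - Real.sin θ * v 1)^2
          + (Real.sin θ * v 0 + Real.cos θ * v 1)^2 = v 0^2 + v 1^2 := by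
        linear_combination (v 0^2 + v 1^2) * (Real.sin_sq_add_cos_sq θ)
      rw [hn]
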